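/- If A is a set of integers and s_A(n) = 2 for infinitely many integers n, then d_A(n) ≥ 2 for infinitely many positive integers n. -/

import Mathlib

private lemma aux_pair (A : Set ℤ) (a b c d n : ℤ) (ha : a ∈ A) (hb : b ∈ A)
    (hc : c ∈ A) (hd : d ∈ A) (hcd : c ≤ d) (h1 : a + b = n) (h2 : c + d = n)
    (hac : a < c) :
    ∃ m x y : ℤ, 0 < m ∧ x ∈ A ∧ x + m ∈ A ∧ y ∈ A ∧ y - m ∈ A ∧ x + y = n ∧ x + m ≠ y := by
  refine ⟨b - c, c, d, by omega, hc, ?_, hd, ?_, by omega, by omega⟩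
  · have h : c + (b - c) = b := by ring
    rw [h]; exact hb
  · have h : d - (b - c) = a := by omega
    rw [h]; exact ha

theorem stmt_17 (A : Set ℤ)
    (h : {n : ℤ |
        ({p : ℤ × ℤ | p.1 ∈ A ∧ p.2 ∈ A ∧ p.1 ≤ p.2 ∧ p.1 + p.2 = n}).ncard = 2}.Infinite) :
    {n : ℤ | 0 < n ∧
      ∃ p q : ℤ × ℤ, p ≠ q ∧
        (p.1 ∈ A ∧ p.2 ∈ A ∧ p.1 - p.2 = n) ∧
        (q.1 ∈ A ∧ q.2 ∈ A ∧ q.1 - q.2 = n)}.Infinite := by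
  by_contra hfin
  rw [Set.not_infinite] at hfin
  set T := {n : ℤ | 0 < n ∧
      ∃ p q : ℤ × ℤ, p ≠ q ∧
        (p.1 ∈ A ∧ p.2 ∈ A ∧ p.1 - p.2 = n) ∧
        (q.1 ∈ A ∧ q.2 ∈ A ∧ q.1 - q.2 = n)} with hTdef
  set S := {n : ℤ |
      ({p : ℤ × ℤ | p.1 ∈ A ∧ p.2 ∈ A ∧ p.1 ≤ p.2 ∧ p.1 + p.2 = n}).ncard = 2} with hSdef
  -- membership criterion for T
  have memT : ∀ m x y : ℤ, 0 < m → x ∈ A → x + m ∈ A → y ∈ A → y - m ∈ A → x + m ≠ y →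
      m ∈ T := by
    intro m x y hm hx hxm hy hym hne
    refine ⟨hm, (x + m, x), (y, y - m), ?_, ⟨hxm, hx, by ring⟩, ⟨hy, hym, by ring⟩⟩
    intro heq
    exact hne (congrArg Prod.fst heq)
  -- extraction from each n ∈ S
  have key1 : ∀ n : ℤ, n ∈ S →
      ∃ m x y : ℤ, 0 < m ∧ x ∈ A ∧ x + m ∈ A ∧ y ∈ A ∧ y - m ∈ A ∧ x + y = n ∧ x + m ≠ y := by
    intro n hn
    have hn' : ({p : ℤ × ℤ | p.1 ∈ A ∧ p.2 ∈ A ∧ p.1 ≤ p.2 ∧ p.1 + p.2 = n}).ncard = 2 := hn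
    rw [Set.ncard_eq_two] at hn'
    obtain ⟨⟨a, b⟩, ⟨c, d⟩, hpq, hset⟩ := hn'
    have hp : ((a, b) : ℤ × ℤ) ∈
        {p : ℤ × ℤ | p.1 ∈ A ∧ p.2 ∈ A ∧ p.1 ≤ p.2 ∧ p.1 + p.2 = n} := by
      rw [hset]; exact Set.mem_insert _ _
    have hq : ((c, d) : ℤ × ℤ) ∈
        {p : ℤ × ℤ | p.1 ∈ A ∧ p.2 ∈ A ∧ p.1 ≤ p.2 ∧ p.1 + p.2 = n} := by
      rw [hset]; exact Set.mem_insert_of_mem _ rfl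
    obtain ⟨ha, hb, hab, hsum1⟩ := hp
    obtain ⟨hc, hd, hcd, hsum2⟩ := hq
    rcases lt_trichotomy a c with h1 | h1 | h1
    · exact aux_pair A a b c d n ha hb hc hd hcd hsum1 hsum2 h1
    · exfalso
      apply hpq
      have h2 : b = d := by omega
      simp only [Prod.mk.injEq]
      exact ⟨h1, h2⟩
    · exact aux_pair A c d a b n hc hd ha hb hab hsum2 hsum1 h1
  choose! f g k hm hx hxm hy hym hsum hne using key1
  have hfS : ∀ n ∈ S, f n ∈ T := fun n hn =>
    memT _ _ _ (hm n hn) (hx n hn) (hxm n hn) (hy n hn) (hym n hn) (hne n hn)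
  -- pigeonhole: some fiber is infinite
  have hpig : ∃ m ∈ T, {n : ℤ | n ∈ S ∧ f n = m}.Infinite := by
    by_contra hc
    push_neg at hc
    have hsub : S ⊆ ⋃ m ∈ T, {n : ℤ | n ∈ S ∧ f n = m} := fun n hn =>
      Set.mem_biUnion (hfS n hn) ⟨hn, rfl⟩
    exact h (Set.Finite.subset
      (Set.Finite.biUnion hfin fun m hmT => hc m hmT) hsub)
  obtain ⟨m, hmT, hFib⟩ := hpig
  set C := {x : ℤ | x ∈ A ∧ x + m ∈ A} with hCdef
  have hCinf : C.Infinite := by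
    by_contra hCfin
    rw [Set.not_infinite] at hCfin
    have hsub : {n : ℤ | n ∈ S ∧ f n = m} ⊆ (fun p : ℤ × ℤ => p.1 + p.2 + m) '' (C ×ˢ C) := by
      rintro n ⟨hnS, hfm⟩
      refine ⟨(g n, k n - m), ⟨⟨hx n hnS, ?_⟩, ⟨?_, ?_⟩⟩, ?_⟩
      · rw [← hfm]; exact hxm n hnS
      · rw [← hfm]; exact hym n hnS
      · have h2 : k n - m + m = k n := by ring
        rw [h2]; exact hy n hnS
      · have h3 := hsum n hnS
        show g n + (k n - m) + m = n
        omega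
    exact hFib (Set.Finite.subset ((hCfin.prod hCfin).image _) hsub)
  obtain ⟨c0, hc0⟩ := hCinf.nonempty
  have hsub2 : C \ {c0} ⊆ (fun u => c0 + u) '' T ∪ (fun u => c0 - u) '' T := by
    rintro c ⟨hcC, hne0⟩
    have hne0' : c ≠ c0 := hne0
    rcases lt_or_gt_of_ne hne0' with hlt | hgt
    · right
      refine ⟨c0 - c, memT (c0 - c) (c + m) c0 (by omega) hcC.2 ?_ hc0.1 ?_ ?_, ?_⟩
      · have h1 : c + m + (c0 - c) = c0 + m := by ring
        rw [h1]; exact hc0.2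
      · have h1 : c0 - (c0 - c) = c := by ring
        rw [h1]; exact hcC.1
      · have := hmT.1; omega
      · show c0 - (c0 - c) = c; ring
    · left
      refine ⟨c - c0, memT (c - c0) (c0 + m) c (by omega) hc0.2 ?_ hcC.1 ?_ ?_, ?_⟩
      · have h1 : c0 + m + (c - c0) = c + m := by ring
        rw [h1]; exact hcC.2
      · have h1 : c - (c - c0) = c0 := by ring
        rw [h1]; exact hc0.1
      · have := hmT.1; omega
      · show c0 + (c - c0) = c; ring
  have hfinC : (C \ {c0}).Finite :=
    Set.Finite.subset ((hfin.image _).union (hfin.image _)) hsub2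
  apply hCinf
  have : C ⊆ insert c0 (C \ {c0}) := by
    intro x hxC
    by_cases hx0 : x = c0
    · simp [hx0]
    · exact Set.mem_insert_of_mem _ ⟨hxC, hx0⟩
  exact (hfinC.insert c0).subset this
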